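/- Let S ⊆ ℝ² be a bounded measurable set whose topological frontier is the image of a continuous closed curve of length L with L > 1. Then the number of pairs (i,j) ∈ ℤ² such that the open square (i,i+1) × (j,j+1) intersects S is at most area(S) + 4·L, where area denotes two-dimensional Lebesgue measure. -/

import Mathlib

open MeasureTheory
open scoped ENNReal

/-- The open unit grid square with lower-left corner `(i, j)`. -/
def openGridSquare (i j : ℤ) : Set (EuclideanSpace ℝ (Fin 2)) :=
  {p | p 0 ∈ Set.Ioo (i : ℝ) (i + 1) ∧ p 1 ∈ Set.Ioo (j : ℝ) (j + 1)}

namespace CardSquaresAux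

lemma coord_dist_le (p q : EuclideanSpace ℝ (Fin 2)) (k : Fin 2) :
    |p k - q k| ≤ dist p q := by
  rw [EuclideanSpace.dist_eq]
  have h1 : |p k - q k| = Real.sqrt (dist (p k) (q k) ^ 2) := by
    rw [Real.sqrt_sq_eq_abs, abs_of_nonneg dist_nonneg, Real.dist_eq]
  rw [h1]
  exact Real.sqrt_le_sqrt (Finset.single_le_sum (f := fun i => dist (p i) (q i) ^ 2)
    (fun i _ => sq_nonneg _) (Finset.mem_univ k))

lemma int_eq_of_mem_Ioo {i j : ℤ} {x : ℝ} (h1 : x ∈ Set.Ioo (i : ℝ) (i + 1))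
    (h2 : x ∈ Set.Ioo (j : ℝ) (j + 1)) : i = j := by
  by_contra hne
  rcases lt_or_gt_of_ne hne with h | h
  · have : (i : ℝ) + 1 ≤ (j : ℝ) := by exact_mod_cast h
    have := h1.2
    have := h2.1
    linarith
  · have : (j : ℝ) + 1 ≤ (i : ℝ) := by exact_mod_cast h
    have := h2.2
    have := h1.1
    linarith

lemma eq_of_mem_square {a b : ℤ × ℤ} {p : EuclideanSpace ℝ (Fin 2)}
    (hpa : p ∈ openGridSquare a.1 a.2) (hpb : p ∈ openGridSquare b.1 b.2) : a = b := by
  have h1 := int_eq_of_mem_Ioo hpa.1 hpb.1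
  have h2 := int_eq_of_mem_Ioo hpa.2 hpb.2
  exact Prod.ext h1 h2

lemma one_lt_abs_of_parity {i j : ℤ} {x y : ℝ} (hij : i ≠ j) (hpar : i % 2 = j % 2)
    (hx : x ∈ Set.Ioo (i : ℝ) (i + 1)) (hy : y ∈ Set.Ioo (j : ℝ) (j + 1)) :
    1 < |x - y| := by
  have h3 : i + 2 ≤ j ∨ j + 2 ≤ i := by omega
  rcases h3 with h | h
  · have hc : (i : ℝ) + 2 ≤ (j : ℝ) := by exact_mod_cast h
    have hlt : 1 < y - x := by
      have := hx.2; have := hy.1; linarith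
    calc (1 : ℝ) < y - x := hlt
      _ ≤ |y - x| := le_abs_self _
      _ = |x - y| := abs_sub_comm _ _
  · have hc : (j : ℝ) + 2 ≤ (i : ℝ) := by exact_mod_cast h
    have hlt : 1 < x - y := by
      have := hy.2; have := hx.1; linarith
    calc (1 : ℝ) < x - y := hlt
      _ ≤ |x - y| := le_abs_self _

lemma one_lt_dist {a b : ℤ × ℤ} (hab : a ≠ b) (h1 : a.1 % 2 = b.1 % 2)
    (h2 : a.2 % 2 = b.2 % 2) {p q : EuclideanSpace ℝ (Fin 2)}
    (hp : p ∈ openGridSquare a.1 a.2) (hq : q ∈ openGridSquare b.1 b.2) :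
    1 < dist p q := by
  have hcase : a.1 ≠ b.1 ∨ a.2 ≠ b.2 := by
    by_contra hc
    push_neg at hc
    exact hab (Prod.ext hc.1 hc.2)
  rcases hcase with h | h
  · calc (1 : ℝ) < |p 0 - q 0| := one_lt_abs_of_parity h h1 hp.1 hq.1
      _ ≤ dist p q := coord_dist_le p q 0
  · calc (1 : ℝ) < |p 1 - q 1| := one_lt_abs_of_parity h h2 hp.2 hq.2
      _ ≤ dist p q := coord_dist_le p q 1

lemma convex_square (i j : ℤ) : Convex ℝ (openGridSquare i j) := by
  intro p hp q hq a b ha hb hab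
  constructor
  · have h := (convex_Ioo (i : ℝ) (i + 1)) hp.1 hq.1 ha hb hab
    simpa [PiLp.add_apply, PiLp.smul_apply, smul_eq_mul] using h
  · have h := (convex_Ioo (j : ℝ) (j + 1)) hp.2 hq.2 ha hb hab
    simpa [PiLp.add_apply, PiLp.smul_apply, smul_eq_mul] using h

lemma square_eq_preimage (i j : ℤ) : openGridSquare i j =
    (MeasurableEquiv.toLp 2 (Fin 2 → ℝ)).symm ⁻¹'
      (Set.univ.pi fun k : Fin 2 => Set.Ioo (![(i : ℝ), (j : ℝ)] k) (![(i : ℝ), (j : ℝ)] k + 1)) := by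
  ext p
  simp only [Set.mem_preimage, Set.mem_pi, Set.mem_univ, forall_true_left,
    MeasurableEquiv.coe_toLp_symm]
  constructor
  · rintro ⟨h0, h1⟩ k
    fin_cases k
    · simpa using h0
    · simpa using h1
  · intro h
    exact ⟨by simpa using h 0, by simpa using h 1⟩

lemma measurableSet_square (i j : ℤ) : MeasurableSet (openGridSquare i j) := by
  rw [square_eq_preimage]
  exact (MeasurableEquiv.toLp 2 (Fin 2 → ℝ)).symm.measurable
    (MeasurableSet.univ_pi fun k => measurableSet_Ioo)

lemma volume_square (i j : ℤ) : volume (openGridSquare i j) = 1 := by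
  rw [square_eq_preimage]
  rw [(EuclideanSpace.volume_preserving_symm_measurableEquiv_toLp (Fin 2)).measure_preimage_equiv]
  rw [volume_pi_pi]
  have : ∀ k : Fin 2, volume (Set.Ioo (![(i : ℝ), (j : ℝ)] k) (![(i : ℝ), (j : ℝ)] k + 1)) = 1 := by
    intro k
    rw [Real.volume_Ioo]
    simp
  simp [this]

/-- Key counting lemma: any finite collection of squares from a single parity class,
each meeting the closed curve, has at most `L` members. -/
lemma card_parity_le {γ : ℝ → EuclideanSpace ℝ (Fin 2)} {L : ℝ}
    (hclosed : γ 0 = γ 1)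
    (hlen : eVariationOn γ (Set.Icc 0 1) = ENNReal.ofReal L) (hL : 1 < L)
    (F : Finset (ℤ × ℤ))
    (hpar : ∀ a ∈ F, ∀ b ∈ F, a.1 % 2 = b.1 % 2 ∧ a.2 % 2 = b.2 % 2)
    (hmeet : ∀ a ∈ F, ∃ t, t ∈ Set.Icc (0 : ℝ) 1 ∧ γ t ∈ openGridSquare a.1 a.2) :
    (F.card : ℝ) ≤ L := by
  classical
  rcases le_or_gt F.card 1 with hsmall | hbig
  · have : (F.card : ℝ) ≤ 1 := by exact_mod_cast hsmall
    linarith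
  obtain ⟨m, hm⟩ : ∃ m, F.card = m + 2 := ⟨F.card - 2, by omega⟩
  set n := F.card with hn
  choose! w hw using hmeet
  have hwIcc : ∀ a ∈ F, w a ∈ Set.Icc (0 : ℝ) 1 := fun a ha => (hw a ha).1
  have hwsq : ∀ a ∈ F, γ (w a) ∈ openGridSquare a.1 a.2 := fun a ha => (hw a ha).2
  have hinj : Set.InjOn w F := by
    intro a ha b hb hab
    have h1 := hwsq a ha
    have h2 := hwsq b hb
    rw [← hab] at h2
    exact eq_of_mem_square h1 h2
  set T : Finset ℝ := F.image w with hT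
  have hTcard : T.card = n := Finset.card_image_of_injOn hinj
  set e := T.orderIsoOfFin hTcard with he
  set u : Fin n → ℝ := fun k => (e k : ℝ) with hu
  have humono : StrictMono u := by
    intro k l hkl
    exact Subtype.coe_lt_coe.2 (e.strictMono hkl)
  have humem : ∀ k, u k ∈ T := fun k => (e k).2
  have hex : ∀ k : Fin n, ∃ a, a ∈ F ∧ w a = u k := by
    intro k
    rcases Finset.mem_image.1 (humem k) with ⟨a, ha, hwa⟩
    exact ⟨a, ha, hwa⟩
  choose A hAF hAw using hex
  have husq : ∀ k, γ (u k) ∈ openGridSquare (A k).1 (A k).2 := by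
    intro k; rw [← hAw k]; exact hwsq _ (hAF k)
  have huIcc : ∀ k, u k ∈ Set.Icc (0 : ℝ) 1 := by
    intro k; rw [← hAw k]; exact hwIcc _ (hAF k)
  have hAinj : ∀ k l : Fin n, k ≠ l → A k ≠ A l := by
    intro k l hkl heq
    apply hkl
    apply humono.injective
    rw [← hAw k, ← hAw l, heq]
  have hedist : ∀ k l : Fin n, k ≠ l → 1 < edist (γ (u k)) (γ (u l)) := by
    intro k l hkl
    have hd : 1 < dist (γ (u k)) (γ (u l)) :=
      one_lt_dist (hAinj k l hkl) (hpar _ (hAF k) _ (hAF l)).1 (hpar _ (hAF k) _ (hAF l)).2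
        (husq k) (husq l)
    rw [edist_dist]
    calc (1 : ℝ≥0∞) = ENNReal.ofReal 1 := ENNReal.ofReal_one.symm
      _ < ENNReal.ofReal (dist (γ (u k)) (γ (u l))) :=
        (ENNReal.ofReal_lt_ofReal_iff (by linarith)).2 hd
  -- chain
  have hn2 : 2 ≤ n := hbig
  set c : ℕ → ℝ := fun s => if s = 0 then 0 else if h : s ≤ n then u ⟨s - 1, by omega⟩ else 1
    with hc
  have hc0 : c 0 = 0 := by simp [hc]
  have hcmid : ∀ s, 1 ≤ s → ∀ h2 : s ≤ n, c s = u ⟨s - 1, by omega⟩ := by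
    intro s h1 h2
    simp only [hc]
    rw [if_neg (by omega), dif_pos h2]
  have hctop : ∀ s, n < s → c s = 1 := by
    intro s hs
    simp only [hc]
    rw [if_neg (by omega), dif_neg (by omega)]
  have hcmono : Monotone c := by
    apply monotone_nat_of_le_succ
    intro s
    rcases Nat.eq_zero_or_pos s with rfl | hs
    · rw [hc0, hcmid 1 le_rfl (by omega)]
      exact (huIcc _).1
    · rcases le_or_gt (s + 1) n with hle | hlt
      · rw [hcmid s hs (by omega), hcmid (s + 1) (by omega) hle]
        apply humono.monotone
        simp only [Fin.mk_le_mk]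
        omega
      · rcases le_or_gt s n with hle2 | hlt2
        · rw [hcmid s hs hle2, hctop (s + 1) hlt]
          exact (huIcc _).2
        · rw [hctop s hlt2, hctop (s + 1) (by omega)]
  have hcIcc : ∀ s, c s ∈ Set.Icc (0 : ℝ) 1 := by
    intro s
    rcases Nat.eq_zero_or_pos s with rfl | hs
    · rw [hc0]; exact ⟨le_rfl, zero_le_one⟩
    · rcases le_or_gt s n with hle | hlt
      · rw [hcmid s hs hle]; exact huIcc _
      · rw [hctop s hlt]; exact ⟨zero_le_one, le_rfl⟩
  have hsum := eVariationOn.sum_le (f := γ) (n := n + 1) hcmono hcIcc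
  rw [hlen] at hsum
  set D : ℕ → ℝ≥0∞ := fun s => edist (γ (c (s + 1))) (γ (c s)) with hD
  -- split the sum
  rw [hm] at hsum
  have hsplit : ∑ s ∈ Finset.range (m + 2 + 1), D s
      = (D 0 + D (m + 2)) + ∑ s ∈ Finset.range (m + 1), D (s + 1) := by
    rw [Finset.sum_range_succ, Finset.sum_range_succ']
    ring
  rw [hsplit] at hsum
  -- middle terms
  have hmid : ∀ s ∈ Finset.range (m + 1), (1 : ℝ≥0∞) ≤ D (s + 1) := by
    intro s hsr
    have hsr' : s < m + 1 := Finset.mem_range.1 hsr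
    have e1 : c (s + 1) = u ⟨s, by omega⟩ := by
      rw [hcmid (s + 1) (by omega) (by omega)]
      exact congrArg u (Fin.mk_eq_mk.mpr (by omega))
    have e2 : c (s + 2) = u ⟨s + 1, by omega⟩ := by
      rw [hcmid (s + 2) (by omega) (by omega)]
      exact congrArg u (Fin.mk_eq_mk.mpr (by omega))
    have : (1 : ℝ≥0∞) < D (s + 1) := by
      rw [hD]
      simp only []
      rw [e1, e2]
      exact hedist _ _ (by simp [Fin.ext_iff])
    exact this.le
  have hmid_le : (m + 1 : ℝ≥0∞) ≤ ∑ s ∈ Finset.range (m + 1), D (s + 1) := by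
    calc (m + 1 : ℝ≥0∞) = ∑ _s ∈ Finset.range (m + 1), (1 : ℝ≥0∞) := by simp
      _ ≤ _ := Finset.sum_le_sum hmid
  -- wrap term
  have hwrap : (1 : ℝ≥0∞) < D 0 + D (m + 2) := by
    have e1 : c 1 = u ⟨0, by omega⟩ := by
      rw [hcmid 1 le_rfl (by omega)]
    have e2 : c (m + 2) = u ⟨m + 1, by omega⟩ := by
      rw [hcmid (m + 2) (by omega) (by omega)]
      exact congrArg u (Fin.mk_eq_mk.mpr (by omega))
    have e3 : c (m + 3) = 1 := hctop (m + 3) (by omega)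
    have htri : edist (γ (u ⟨0, by omega⟩)) (γ (u ⟨m + 1, by omega⟩)) ≤ D 0 + D (m + 2) := by
      rw [hD]
      simp only []
      rw [hc0, e1, e2, e3]
      calc edist (γ (u ⟨0, by omega⟩)) (γ (u ⟨m + 1, by omega⟩))
          ≤ edist (γ (u ⟨0, by omega⟩)) (γ 0) + edist (γ 0) (γ (u ⟨m + 1, by omega⟩)) :=
            edist_triangle _ _ _
        _ = edist (γ (u ⟨0, by omega⟩)) (γ 0) + edist (γ 1) (γ (u ⟨m + 1, by omega⟩)) := by
            rw [hclosed, edist_comm]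
        _ = _ := by rw [edist_comm (γ (u ⟨0, by omega⟩)) (γ 0)]
    refine lt_of_lt_of_le ?_ htri
    exact hedist _ _ (by simp [Fin.ext_iff])
  -- ∑ is not too small
  have hmidne : (∑ s ∈ Finset.range (m + 1), D (s + 1)) ≠ ⊤ := by
    have hle : (∑ s ∈ Finset.range (m + 1), D (s + 1)) ≤ ENNReal.ofReal L :=
      le_trans le_add_self hsum
    exact (lt_of_le_of_lt hle ENNReal.ofReal_lt_top).ne
  have hkey : ((n : ℝ≥0∞)) < ENNReal.ofReal L := by
    have hcast : (n : ℝ≥0∞) = 1 + ((m : ℝ≥0∞) + 1) := by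
      rw [hm]; push_cast; ring
    rw [hcast]
    calc 1 + ((m : ℝ≥0∞) + 1) ≤ 1 + ∑ s ∈ Finset.range (m + 1), D (s + 1) := by
          exact add_le_add_right hmid_le 1
      _ < (D 0 + D (m + 2)) + ∑ s ∈ Finset.range (m + 1), D (s + 1) :=
          ENNReal.add_lt_add_right hmidne hwrap
      _ ≤ ENNReal.ofReal L := hsum
  have : (n : ℝ) < L := by
    rw [← ENNReal.ofReal_natCast n] at hkey
    exact (ENNReal.ofReal_lt_ofReal_iff_of_nonneg (Nat.cast_nonneg n)).1 hkey
  linarith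

end CardSquaresAux

open CardSquaresAux in
/-- If `S ⊆ ℝ²` is a bounded measurable set whose frontier is the image of a continuous closed
curve of length `L > 1`, then at most `area(S) + 4·L` of the open unit grid squares meet `S`. -/
theorem card_squares_meeting_state (S : Set (EuclideanSpace ℝ (Fin 2)))
    (hSmeas : MeasurableSet S) (hSbdd : Bornology.IsBounded S)
    (γ : ℝ → EuclideanSpace ℝ (Fin 2)) (L : ℝ)
    (hcont : ContinuousOn γ (Set.Icc 0 1)) (hclosed : γ 0 = γ 1)
    (hfront : frontier S = γ '' Set.Icc 0 1)
    (hlen : eVariationOn γ (Set.Icc 0 1) = ENNReal.ofReal L) (hL : 1 < L) :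
    {ij : ℤ × ℤ | (openGridSquare ij.1 ij.2 ∩ S).Nonempty}.encard
      ≤ ENNReal.ofReal ((volume S).toReal + 4 * L) := by
  classical
  set Kset := {ij : ℤ × ℤ | (openGridSquare ij.1 ij.2 ∩ S).Nonempty} with hK
  obtain ⟨R, hR⟩ := hSbdd.subset_closedBall 0
  -- finiteness of Kset
  have hKsub : Kset ⊆ (Set.Icc (⌊-(R + 1)⌋) ⌈R⌉) ×ˢ (Set.Icc (⌊-(R + 1)⌋) ⌈R⌉) := by
    rintro ⟨i, j⟩ ⟨p, hp, hpS⟩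
    have hdist : dist p 0 ≤ R := by
      have := hR hpS
      simpa [Metric.mem_closedBall] using this
    have hcoord : ∀ k : Fin 2, |p k| ≤ R := by
      intro k
      have h := coord_dist_le p 0 k
      have hz : (0 : EuclideanSpace ℝ (Fin 2)) k = 0 := rfl
      rw [hz, sub_zero] at h
      linarith
    have h0 := hcoord 0
    have h1 := hcoord 1
    rw [abs_le] at h0 h1
    constructor
    · constructor
      · -- ⌊-(R+1)⌋ ≤ i
        have : (⌊-(R + 1)⌋ : ℝ) ≤ -(R + 1) := Int.floor_le _
        have h2 := hp.1.2  -- p 0 < i + 1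
        have h3 := h0.1    -- -R ≤ p 0
        have : (⌊-(R + 1)⌋ : ℝ) ≤ (i : ℝ) := by linarith
        exact_mod_cast this
      · have h2 := hp.1.1  -- i < p 0
        have h3 := h0.2
        have : (i : ℝ) ≤ (⌈R⌉ : ℝ) := by
          have := Int.le_ceil R
          linarith
        exact_mod_cast this
    · constructor
      · have : (⌊-(R + 1)⌋ : ℝ) ≤ -(R + 1) := Int.floor_le _
        have h2 := hp.2.2
        have h3 := h1.1
        have : (⌊-(R + 1)⌋ : ℝ) ≤ (j : ℝ) := by linarith
        exact_mod_cast this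
      · have h2 := hp.2.1
        have h3 := h1.2
        have : (j : ℝ) ≤ (⌈R⌉ : ℝ) := by
          have := Int.le_ceil R
          linarith
        exact_mod_cast this
  have hKfin : Kset.Finite :=
    (((Set.finite_Icc _ _).prod (Set.finite_Icc _ _)).subset hKsub)
  -- interior and boundary squares
  set Iset := {ij : ℤ × ℤ | ij ∈ Kset ∧ openGridSquare ij.1 ij.2 ⊆ S} with hI
  set Bset := {ij : ℤ × ℤ | ij ∈ Kset ∧ (openGridSquare ij.1 ij.2 ∩ frontier S).Nonempty} with hB
  have hIfin : Iset.Finite := hKfin.subset fun x hx => hx.1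
  have hBfin : Bset.Finite := hKfin.subset fun x hx => hx.1
  have hcover : Kset ⊆ Iset ∪ Bset := by
    rintro ⟨i, j⟩ hij
    by_cases hfr : (openGridSquare i j ∩ frontier S).Nonempty
    · right; exact ⟨hij, hfr⟩
    · left
      refine ⟨hij, ?_⟩
      have hpre : IsPreconnected (openGridSquare i j) := (convex_square i j).isPreconnected
      have hnofr : ∀ p ∈ openGridSquare i j, p ∉ frontier S := by
        intro p hp hpf
        exact hfr ⟨p, hp, hpf⟩
      have hsub : openGridSquare i j ⊆ interior S ∪ (closure S)ᶜ := by
        intro p hp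
        by_cases hcl : p ∈ closure S
        · left
          by_contra hint
          exact hnofr p hp ⟨hcl, hint⟩
        · right; exact hcl
      obtain ⟨x, hx_sq, hxS⟩ := hij
      have hxint : x ∈ interior S := by
        by_contra hint
        exact hnofr x hx_sq ⟨subset_closure hxS, hint⟩
      have hdisj : Disjoint (interior S) (closure S)ᶜ :=
        disjoint_compl_right.mono_left interior_subset_closure
      have hres : openGridSquare i j ⊆ interior S :=
        IsPreconnected.subset_left_of_subset_union isOpen_interior
          isClosed_closure.isOpen_compl hdisj hsub ⟨x, hx_sq, hxint⟩ hpre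
      exact hres.trans interior_subset
  -- interior count ≤ volume
  have hIvol : (hIfin.toFinset.card : ℝ≥0∞) ≤ volume S := by
    have hdisjf : (↑hIfin.toFinset : Set (ℤ × ℤ)).PairwiseDisjoint
        (fun ij : ℤ × ℤ => openGridSquare ij.1 ij.2) := by
      intro a _ b _ hab
      rw [Function.onFun, Set.disjoint_left]
      intro p hpa hpb
      exact hab (eq_of_mem_square hpa hpb)
    have hmeas := measure_biUnion_finset (μ := volume) hdisjf
      (fun ij _ => measurableSet_square ij.1 ij.2)
    have hsubS : (⋃ ij ∈ hIfin.toFinset, openGridSquare ij.1 ij.2) ⊆ S := by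
      simp only [Set.iUnion_subset_iff]
      intro ij hij
      exact (hIfin.mem_toFinset.1 hij).2
    calc (hIfin.toFinset.card : ℝ≥0∞)
        = ∑ ij ∈ hIfin.toFinset, volume (openGridSquare ij.1 ij.2) := by
          simp [volume_square]
      _ = volume (⋃ ij ∈ hIfin.toFinset, openGridSquare ij.1 ij.2) := hmeas.symm
      _ ≤ volume S := measure_mono hsubS
  have hvol_ne : volume S ≠ ⊤ := hSbdd.measure_lt_top.ne
  have hIcard : (hIfin.toFinset.card : ℝ) ≤ (volume S).toReal := by
    have h := ENNReal.toReal_mono hvol_ne hIvol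
    simpa using h
  -- boundary count ≤ 4L
  have hBcard : (hBfin.toFinset.card : ℝ) ≤ 4 * L := by
    set f : ℤ × ℤ → ℤ × ℤ := fun ij => (ij.1 % 2, ij.2 % 2) with hf
    set Q : Finset (ℤ × ℤ) := {(0, 0), (0, 1), (1, 0), (1, 1)} with hQ
    have himg : ∀ ij ∈ hBfin.toFinset, f ij ∈ Q := by
      intro ij _
      simp only [hf, hQ, Finset.mem_insert, Finset.mem_singleton, Prod.mk.injEq]
      omega
    have hcardsum : hBfin.toFinset.card
        = ∑ r ∈ Q, (hBfin.toFinset.filter fun ij => f ij = r).card :=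
      Finset.card_eq_sum_card_fiberwise himg
    have hfiber : ∀ r : ℤ × ℤ, (((hBfin.toFinset.filter fun ij => f ij = r).card : ℝ)) ≤ L := by
      intro r
      apply card_parity_le hclosed hlen hL
      · intro a ha b hb
        rw [Finset.mem_filter] at ha hb
        have hfab : f a = f b := ha.2.trans hb.2.symm
        rw [hf] at hfab
        exact ⟨congrArg Prod.fst hfab, congrArg Prod.snd hfab⟩
      · intro a ha
        rw [Finset.mem_filter] at ha
        have haB : a ∈ Bset := hBfin.mem_toFinset.1 ha.1
        obtain ⟨p, hpsq, hpfr⟩ := haB.2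
        rw [hfront] at hpfr
        obtain ⟨t, ht, hpt⟩ := hpfr
        exact ⟨t, ht, by rw [hpt]; exact hpsq⟩
    calc (hBfin.toFinset.card : ℝ)
        = ∑ r ∈ Q, ((hBfin.toFinset.filter fun ij => f ij = r).card : ℝ) := by
          rw [hcardsum]; push_cast; ring
      _ ≤ ∑ _r ∈ Q, L := Finset.sum_le_sum fun r _ => hfiber r
      _ = 4 * L := by
          rw [Finset.sum_const]
          have : Q.card = 4 := by decide
          rw [this]
          simp [nsmul_eq_mul]
  -- combine
  have hKcard : hKfin.toFinset.card ≤ hIfin.toFinset.card + hBfin.toFinset.card := by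
    calc hKfin.toFinset.card ≤ (hIfin.toFinset ∪ hBfin.toFinset).card := by
          apply Finset.card_le_card
          intro x hx
          have hxK : x ∈ Kset := hKfin.mem_toFinset.1 hx
          rcases hcover hxK with h | h
          · exact Finset.mem_union_left _ (hIfin.mem_toFinset.2 h)
          · exact Finset.mem_union_right _ (hBfin.mem_toFinset.2 h)
      _ ≤ _ := Finset.card_union_le _ _
  rw [Set.Finite.encard_eq_coe_toFinset_card hKfin, ENat.toENNReal_coe,
    ← ENNReal.ofReal_natCast]
  apply ENNReal.ofReal_le_ofReal
  have hcast : (hKfin.toFinset.card : ℝ) ≤ (hIfin.toFinset.card : ℝ) + hBfin.toFinset.card := by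
    exact_mod_cast hKcard
  linarith
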